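/- Let h ≥ 1, let S ⊆ {1,…,h}, let a_1,…,a_h be nonzero reals and μ_1,…,μ_h ∈ ℝ. Define σ : ℝ → ℝ^h componentwise by σ_j(t) = a_j·μ_j·cos(μ_j t) for j ∈ S and σ_j(t) = a_j·μ_j·sin(μ_j t) for j ∉ S (so each component is the derivative of a single sinusoid). Then σ is persistently exciting on [0, ∞) if and only if μ_j ≠ 0 for all j ∈ {1,…,h} and μ_i ≠ μ_j as well as μ_i ≠ −μ_j for all i ≠ j with either both i, j ∈ S or both i, j ∉ S. -/

import Mathlib

open MeasureTheory

/-- The matrix `∫_t^{t+T} σ(τ)σ(τ)ᵀ dτ`, computed entrywise. -/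
noncomputable def peMatrix {h : ℕ} (σ : ℝ → Fin h → ℝ) (t T : ℝ) : Matrix (Fin h) (Fin h) ℝ :=
  Matrix.of fun i j => ∫ τ in t..(t + T), σ τ i * σ τ j

/-- `σ` is persistently exciting on `[t₀, ∞)`: there are `α, T > 0` such that
`∫_t^{t+T} σσᵀ dτ − α·I` is positive semidefinite for all `t ≥ t₀`. -/
def IsPE {h : ℕ} (σ : ℝ → Fin h → ℝ) (t₀ : ℝ) : Prop :=
  ∃ α T : ℝ, 0 < α ∧ 0 < T ∧ ∀ t ≥ t₀,
    (peMatrix σ t T - α • (1 : Matrix (Fin h) (Fin h) ℝ)).PosSemidef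

open intervalIntegral Real

lemma cosInt (ω A B : ℝ) : IntervalIntegrable (fun τ => Real.cos (ω * τ)) volume A B :=
  (Real.continuous_cos.comp (continuous_const.mul continuous_id)).intervalIntegrable _ _

lemma sinInt (ω A B : ℝ) : IntervalIntegrable (fun τ => Real.sin (ω * τ)) volume A B :=
  (Real.continuous_sin.comp (continuous_const.mul continuous_id)).intervalIntegrable _ _

lemma trig_abs_sub_le (x y : ℝ) (hx : |x| ≤ 1) (hy : |y| ≤ 1) : |x - y| ≤ 2 := by
  calc |x - y| ≤ |x| + |y| := abs_sub _ _
  _ ≤ 2 := by linarith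

lemma icos_eval (ω A B : ℝ) (hω : ω ≠ 0) :
    ∫ τ in A..B, Real.cos (ω * τ) = (Real.sin (ω * B) - Real.sin (ω * A)) / ω := by
  rw [intervalIntegral.integral_comp_mul_left (fun x => Real.cos x) hω]
  simp [integral_cos, div_eq_inv_mul, mul_sub]

lemma isin_eval (ω A B : ℝ) (hω : ω ≠ 0) :
    ∫ τ in A..B, Real.sin (ω * τ) = (Real.cos (ω * A) - Real.cos (ω * B)) / ω := by
  rw [intervalIntegral.integral_comp_mul_left (fun x => Real.sin x) hω]
  simp [integral_sin, div_eq_inv_mul, mul_sub]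

lemma icos_bound (ω A B : ℝ) (hω : ω ≠ 0) :
    |∫ τ in A..B, Real.cos (ω * τ)| ≤ 2 / |ω| := by
  rw [icos_eval ω A B hω, abs_div]
  gcongr
  exact trig_abs_sub_le _ _ (Real.abs_sin_le_one _) (Real.abs_sin_le_one _)

lemma isin_bound (ω A B : ℝ) :
    |∫ τ in A..B, Real.sin (ω * τ)| ≤ 2 / |ω| := by
  rcases eq_or_ne ω 0 with rfl | hω
  · simp
  · rw [isin_eval ω A B hω, abs_div]
    gcongr
    exact trig_abs_sub_le _ _ (Real.abs_cos_le_one _) (Real.abs_cos_le_one _)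

lemma int_cc (p q A B : ℝ) : ∫ τ in A..B, Real.cos (p*τ) * Real.cos (q*τ)
    = ((∫ τ in A..B, Real.cos ((p-q)*τ)) + ∫ τ in A..B, Real.cos ((p+q)*τ)) / 2 := by
  rw [← intervalIntegral.integral_add (cosInt _ _ _) (cosInt _ _ _), ← intervalIntegral.integral_div]
  apply intervalIntegral.integral_congr
  intro τ _
  simp only [sub_mul, add_mul, Real.cos_sub, Real.cos_add]
  ring

lemma int_ss (p q A B : ℝ) : ∫ τ in A..B, Real.sin (p*τ) * Real.sin (q*τ)
    = ((∫ τ in A..B, Real.cos ((p-q)*τ)) - ∫ τ in A..B, Real.cos ((p+q)*τ)) / 2 := by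
  rw [← intervalIntegral.integral_sub (cosInt _ _ _) (cosInt _ _ _), ← intervalIntegral.integral_div]
  apply intervalIntegral.integral_congr
  intro τ _
  simp only [sub_mul, add_mul, Real.cos_sub, Real.cos_add]
  ring

lemma int_cs (p q A B : ℝ) : ∫ τ in A..B, Real.cos (p*τ) * Real.sin (q*τ)
    = ((∫ τ in A..B, Real.sin ((p+q)*τ)) - ∫ τ in A..B, Real.sin ((p-q)*τ)) / 2 := by
  rw [← intervalIntegral.integral_sub (sinInt _ _ _) (sinInt _ _ _), ← intervalIntegral.integral_div]
  apply intervalIntegral.integral_congr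
  intro τ _
  simp only [sub_mul, add_mul, Real.sin_sub, Real.sin_add]
  ring

lemma int_sc (p q A B : ℝ) : ∫ τ in A..B, Real.sin (p*τ) * Real.cos (q*τ)
    = ((∫ τ in A..B, Real.sin ((p+q)*τ)) + ∫ τ in A..B, Real.sin ((p-q)*τ)) / 2 := by
  rw [← intervalIntegral.integral_add (sinInt _ _ _) (sinInt _ _ _), ← intervalIntegral.integral_div]
  apply intervalIntegral.integral_congr
  intro τ _
  simp only [sub_mul, add_mul, Real.sin_sub, Real.sin_add]
  ring

lemma icos_zero (t T : ℝ) : ∫ τ in t..(t+T), Real.cos ((0:ℝ) * τ) = T := by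
  simp

lemma entry_est {h : ℕ} (S : Finset (Fin h)) (a μ : Fin h → ℝ)
    (hμ : ∀ j, μ j ≠ 0)
    (hpair : ∀ i j : Fin h, i ≠ j → ((i ∈ S) ↔ (j ∈ S)) → μ i ≠ μ j ∧ μ i ≠ -μ j)
    (i j : Fin h) (t T : ℝ) :
    |(∫ τ in t..(t+T),
        (if i ∈ S then a i * μ i * Real.cos (μ i * τ) else a i * μ i * Real.sin (μ i * τ)) *
        (if j ∈ S then a j * μ j * Real.cos (μ j * τ) else a j * μ j * Real.sin (μ j * τ)))
      - (if i = j then (a i * μ i)^2 * T / 2 else 0)|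
    ≤ |a i * μ i * (a j * μ j)| * (1/|μ i - μ j| + 1/|μ i + μ j|) := by
  set c := a i * μ i * (a j * μ j) with hc
  have hnn₁ : (0:ℝ) ≤ 1/|μ i - μ j| := by positivity
  have hnn₂ : (0:ℝ) ≤ 1/|μ i + μ j| := by positivity
  by_cases hi : i ∈ S <;> by_cases hj : j ∈ S
  · -- cos * cos
    have h1 : (∫ τ in t..(t+T),
        (if i ∈ S then a i * μ i * Real.cos (μ i * τ) else a i * μ i * Real.sin (μ i * τ)) *
        (if j ∈ S then a j * μ j * Real.cos (μ j * τ) else a j * μ j * Real.sin (μ j * τ)))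
        = c * (((∫ τ in t..(t+T), Real.cos ((μ i - μ j)*τ)) +
                ∫ τ in t..(t+T), Real.cos ((μ i + μ j)*τ)) / 2) := by
      rw [← int_cc, ← intervalIntegral.integral_const_mul]
      apply intervalIntegral.integral_congr
      intro τ _
      simp only [if_pos hi, if_pos hj]; ring
    rw [h1]
    rcases eq_or_ne i j with rfl | hij
    · rw [if_pos rfl]
      have h0 : μ i - μ i = 0 := sub_self _
      rw [h0, icos_zero]
      simp only [abs_zero, div_zero, zero_add]
      have h2 : c * ((T + ∫ τ in t..(t+T), Real.cos ((μ i + μ i)*τ)) / 2) - (a i * μ i)^2 * T/2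
          = c/2 * ∫ τ in t..(t+T), Real.cos ((μ i + μ i)*τ) := by rw [hc]; ring
      rw [h2, abs_mul, abs_div, abs_two]
      have hb := icos_bound (μ i + μ i) t (t+T) (by have := hμ i; intro H; apply this; linarith)
      calc |c|/2 * |∫ τ in t..(t+T), Real.cos ((μ i + μ i)*τ)|
          ≤ |c|/2 * (2/|μ i + μ i|) := by gcongr
        _ = |c| * (1/|μ i + μ i|) := by ring
    · rw [if_neg hij, sub_zero]
      obtain ⟨hne, hne'⟩ := hpair i j hij (by simp [hi, hj])
      have hω₁ : μ i - μ j ≠ 0 := sub_ne_zero.mpr hne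
      have hω₂ : μ i + μ j ≠ 0 := by intro H; apply hne'; linarith
      rw [abs_mul]
      apply mul_le_mul_of_nonneg_left _ (abs_nonneg c)
      calc |(((∫ τ in t..(t+T), Real.cos ((μ i - μ j)*τ)) +
                ∫ τ in t..(t+T), Real.cos ((μ i + μ j)*τ)) / 2)|
          ≤ (|∫ τ in t..(t+T), Real.cos ((μ i - μ j)*τ)| +
             |∫ τ in t..(t+T), Real.cos ((μ i + μ j)*τ)|)/2 := by
            rw [abs_div, abs_two]; gcongr; exact abs_add_le _ _
        _ ≤ (2/|μ i - μ j| + 2/|μ i + μ j|)/2 := by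
            gcongr
            · exact icos_bound _ _ _ hω₁
            · exact icos_bound _ _ _ hω₂
        _ = 1/|μ i - μ j| + 1/|μ i + μ j| := by ring
  · -- cos * sin
    have hij : i ≠ j := by rintro rfl; exact hj hi
    have h1 : (∫ τ in t..(t+T),
        (if i ∈ S then a i * μ i * Real.cos (μ i * τ) else a i * μ i * Real.sin (μ i * τ)) *
        (if j ∈ S then a j * μ j * Real.cos (μ j * τ) else a j * μ j * Real.sin (μ j * τ)))
        = c * (((∫ τ in t..(t+T), Real.sin ((μ i + μ j)*τ)) -
                ∫ τ in t..(t+T), Real.sin ((μ i - μ j)*τ)) / 2) := by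
      rw [← int_cs, ← intervalIntegral.integral_const_mul]
      apply intervalIntegral.integral_congr
      intro τ _
      simp only [if_pos hi, if_neg hj]; ring
    rw [h1, if_neg hij, sub_zero, abs_mul]
    apply mul_le_mul_of_nonneg_left _ (abs_nonneg c)
    calc |(((∫ τ in t..(t+T), Real.sin ((μ i + μ j)*τ)) -
            ∫ τ in t..(t+T), Real.sin ((μ i - μ j)*τ)) / 2)|
        ≤ (|∫ τ in t..(t+T), Real.sin ((μ i + μ j)*τ)| +
           |∫ τ in t..(t+T), Real.sin ((μ i - μ j)*τ)|)/2 := by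
          rw [abs_div, abs_two]; gcongr; exact abs_sub _ _
      _ ≤ (2/|μ i + μ j| + 2/|μ i - μ j|)/2 := by
          gcongr <;> exact isin_bound _ _ _
      _ = 1/|μ i - μ j| + 1/|μ i + μ j| := by ring
  · -- sin * cos
    have hij : i ≠ j := by rintro rfl; exact hi hj
    have h1 : (∫ τ in t..(t+T),
        (if i ∈ S then a i * μ i * Real.cos (μ i * τ) else a i * μ i * Real.sin (μ i * τ)) *
        (if j ∈ S then a j * μ j * Real.cos (μ j * τ) else a j * μ j * Real.sin (μ j * τ)))
        = c * (((∫ τ in t..(t+T), Real.sin ((μ i + μ j)*τ)) +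
                ∫ τ in t..(t+T), Real.sin ((μ i - μ j)*τ)) / 2) := by
      rw [← int_sc, ← intervalIntegral.integral_const_mul]
      apply intervalIntegral.integral_congr
      intro τ _
      simp only [if_neg hi, if_pos hj]; ring
    rw [h1, if_neg hij, sub_zero, abs_mul]
    apply mul_le_mul_of_nonneg_left _ (abs_nonneg c)
    calc |(((∫ τ in t..(t+T), Real.sin ((μ i + μ j)*τ)) +
            ∫ τ in t..(t+T), Real.sin ((μ i - μ j)*τ)) / 2)|
        ≤ (|∫ τ in t..(t+T), Real.sin ((μ i + μ j)*τ)| +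
           |∫ τ in t..(t+T), Real.sin ((μ i - μ j)*τ)|)/2 := by
          rw [abs_div, abs_two]; gcongr; exact abs_add_le _ _
      _ ≤ (2/|μ i + μ j| + 2/|μ i - μ j|)/2 := by
          gcongr <;> exact isin_bound _ _ _
      _ = 1/|μ i - μ j| + 1/|μ i + μ j| := by ring
  · -- sin * sin
    have h1 : (∫ τ in t..(t+T),
        (if i ∈ S then a i * μ i * Real.cos (μ i * τ) else a i * μ i * Real.sin (μ i * τ)) *
        (if j ∈ S then a j * μ j * Real.cos (μ j * τ) else a j * μ j * Real.sin (μ j * τ)))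
        = c * (((∫ τ in t..(t+T), Real.cos ((μ i - μ j)*τ)) -
                ∫ τ in t..(t+T), Real.cos ((μ i + μ j)*τ)) / 2) := by
      rw [← int_ss, ← intervalIntegral.integral_const_mul]
      apply intervalIntegral.integral_congr
      intro τ _
      simp only [if_neg hi, if_neg hj]; ring
    rw [h1]
    rcases eq_or_ne i j with rfl | hij
    · rw [if_pos rfl]
      have h0 : μ i - μ i = 0 := sub_self _
      rw [h0, icos_zero]
      simp only [abs_zero, div_zero, zero_add]
      have h2 : c * ((T - ∫ τ in t..(t+T), Real.cos ((μ i + μ i)*τ)) / 2) - (a i * μ i)^2 * T/2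
          = (-(c/2)) * ∫ τ in t..(t+T), Real.cos ((μ i + μ i)*τ) := by rw [hc]; ring
      rw [h2, abs_mul, abs_neg, abs_div, abs_two]
      have hb := icos_bound (μ i + μ i) t (t+T) (by have := hμ i; intro H; apply this; linarith)
      calc |c|/2 * |∫ τ in t..(t+T), Real.cos ((μ i + μ i)*τ)|
          ≤ |c|/2 * (2/|μ i + μ i|) := by gcongr
        _ = |c| * (1/|μ i + μ i|) := by ring
    · rw [if_neg hij, sub_zero]
      obtain ⟨hne, hne'⟩ := hpair i j hij (by simp [hi, hj])
      have hω₁ : μ i - μ j ≠ 0 := sub_ne_zero.mpr hne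
      have hω₂ : μ i + μ j ≠ 0 := by intro H; apply hne'; linarith
      rw [abs_mul]
      apply mul_le_mul_of_nonneg_left _ (abs_nonneg c)
      calc |(((∫ τ in t..(t+T), Real.cos ((μ i - μ j)*τ)) -
                ∫ τ in t..(t+T), Real.cos ((μ i + μ j)*τ)) / 2)|
          ≤ (|∫ τ in t..(t+T), Real.cos ((μ i - μ j)*τ)| +
             |∫ τ in t..(t+T), Real.cos ((μ i + μ j)*τ)|)/2 := by
            rw [abs_div, abs_two]; gcongr; exact abs_sub _ _
        _ ≤ (2/|μ i - μ j| + 2/|μ i + μ j|)/2 := by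
            gcongr
            · exact icos_bound _ _ _ hω₁
            · exact icos_bound _ _ _ hω₂
        _ = 1/|μ i - μ j| + 1/|μ i + μ j| := by ring

/-- Lemma 6 of the paper, case N_P = 1: when every regressor component
is a single sinusoid derivative (`σ_j(t) = a_j μ_j cos(μ_j t)` for `j ∈ S`, else
`a_j μ_j sin(μ_j t)`), persistent excitation holds iff all frequencies are nonzero and
within each trigonometric family frequencies are pairwise distinct in value and sign. -/
theorem stmt_13 (h : ℕ) (hh : 1 ≤ h) (S : Finset (Fin h))
    (a μ : Fin h → ℝ) (ha : ∀ j, a j ≠ 0) :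
    IsPE (fun t j =>
        if j ∈ S then a j * μ j * Real.cos (μ j * t) else a j * μ j * Real.sin (μ j * t)) 0
      ↔ ((∀ j, μ j ≠ 0) ∧
          ∀ i j : Fin h, i ≠ j → ((i ∈ S) ↔ (j ∈ S)) → μ i ≠ μ j ∧ μ i ≠ -μ j) := by
  classical
  set σ : ℝ → Fin h → ℝ := fun t j =>
      if j ∈ S then a j * μ j * Real.cos (μ j * t) else a j * μ j * Real.sin (μ j * t) with hσ
  constructor
  · rintro ⟨α, T, hα, hT, hPE⟩
    have hμ0 : ∀ j, μ j ≠ 0 := by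
      intro j hj0
      have h2 := (hPE 0 le_rfl).dotProduct_mulVec_nonneg (Pi.single j 1)
      simp only [star_trivial, Matrix.mulVec_single, Pi.smul_apply, op_smul_eq_mul, Matrix.col_apply, mul_one, single_dotProduct,
        one_mul, Matrix.sub_apply, Matrix.smul_apply, Matrix.one_apply_eq, smul_eq_mul] at h2
      have hzero : peMatrix σ 0 T j j = 0 := by
        have hz : ∀ τ : ℝ, σ τ j * σ τ j = 0 := by
          intro τ; by_cases hj : j ∈ S <;> simp [hσ, hj, hj0]
        calc peMatrix σ 0 T j j = ∫ τ in (0:ℝ)..(0+T), (0:ℝ) :=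
              intervalIntegral.integral_congr (fun τ _ => hz τ)
          _ = 0 := by simp
      rw [hzero] at h2
      linarith
    refine ⟨hμ0, fun i j hij hiff => ?_⟩
    have contra : ∀ c : ℝ, (∀ τ : ℝ, σ τ i = c * σ τ j) → False := by
      intro c hcc
      have h2 := (hPE 0 le_rfl).dotProduct_mulVec_nonneg (Pi.single i 1 + Pi.single j (-c))
      simp only [star_trivial, Matrix.mulVec_add, Matrix.mulVec_single, Pi.smul_apply, op_smul_eq_mul, Matrix.col_apply, mul_one,
        add_dotProduct, dotProduct_add, single_dotProduct, one_mul,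
        Matrix.sub_apply, Matrix.smul_apply, Matrix.one_apply_eq, Matrix.one_apply_ne hij,
        Matrix.one_apply_ne (Ne.symm hij), smul_eq_mul, mul_zero, sub_zero] at h2
      have gii : peMatrix σ 0 T i i = c^2 * peMatrix σ 0 T j j := by
        show (∫ τ in (0:ℝ)..(0+T), σ τ i * σ τ i)
            = c^2 * ∫ τ in (0:ℝ)..(0+T), σ τ j * σ τ j
        rw [← intervalIntegral.integral_const_mul]
        apply intervalIntegral.integral_congr
        intro τ _; simp only [hcc τ]; ring
      have gij : peMatrix σ 0 T i j = c * peMatrix σ 0 T j j := by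
        show (∫ τ in (0:ℝ)..(0+T), σ τ i * σ τ j)
            = c * ∫ τ in (0:ℝ)..(0+T), σ τ j * σ τ j
        rw [← intervalIntegral.integral_const_mul]
        apply intervalIntegral.integral_congr
        intro τ _; simp only [hcc τ]; ring
      have gji : peMatrix σ 0 T j i = c * peMatrix σ 0 T j j := by
        show (∫ τ in (0:ℝ)..(0+T), σ τ j * σ τ i)
            = c * ∫ τ in (0:ℝ)..(0+T), σ τ j * σ τ j
        rw [← intervalIntegral.integral_const_mul]
        apply intervalIntegral.integral_congr
        intro τ _; simp only [hcc τ]; ring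
      rw [gii, gij, gji] at h2
      nlinarith [sq_nonneg c, hα]
    constructor
    · intro heq
      apply contra ((a i * μ i) / (a j * μ j))
      intro τ
      by_cases hi : i ∈ S
      · have hj : j ∈ S := hiff.mp hi
        simp only [hσ, if_pos hi, if_pos hj, heq]
        have h1 := ha j; have h2 := hμ0 j
        field_simp
        try ring
      · have hj : j ∉ S := fun hj => hi (hiff.mpr hj)
        simp only [hσ, if_neg hi, if_neg hj, heq]
        have h1 := ha j; have h2 := hμ0 j
        field_simp
        try ring
    · intro heq
      apply contra (if i ∈ S then (a i * μ i) / (a j * μ j) else -((a i * μ i) / (a j * μ j)))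
      intro τ
      by_cases hi : i ∈ S
      · have hj : j ∈ S := hiff.mp hi
        simp only [hσ, if_pos hi, if_pos hj, heq, neg_mul, Real.cos_neg, mul_neg]
        have h1 := ha j; have h2 := hμ0 j
        field_simp
        try ring
        try ring
      · have hj : j ∉ S := fun hj => hi (hiff.mpr hj)
        simp only [hσ, if_neg hi, if_neg hj, heq, neg_mul, Real.sin_neg, mul_neg]
        have h1 := ha j; have h2 := hμ0 j
        field_simp
        try ring
        try ring
  · rintro ⟨hμ0, hpair⟩
    have inst : Nonempty (Fin h) := ⟨⟨0, hh⟩⟩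
    have hb : ∀ k, a k * μ k ≠ 0 := fun k => mul_ne_zero (ha k) (hμ0 k)
    set m : ℝ := Finset.univ.inf' Finset.univ_nonempty (fun k => (a k * μ k)^2) with hmdef
    have hm : 0 < m := by
      rw [hmdef, Finset.lt_inf'_iff]
      intro k _
      have := abs_pos.mpr (hb k)
      calc (0:ℝ) < |a k * μ k|^2 := by positivity
        _ = (a k * μ k)^2 := sq_abs _
    have hm_le : ∀ k, m ≤ (a k * μ k)^2 := fun k => Finset.inf'_le _ (Finset.mem_univ k)
    set C : Fin h → Fin h → ℝ :=
      fun i j => |a i * μ i * (a j * μ j)| * (1/|μ i - μ j| + 1/|μ i + μ j|) with hCdef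
    have hC0 : ∀ i j, 0 ≤ C i j := by intro i j; rw [hCdef]; positivity
    set Cm : ℝ := ∑ i, ∑ j, C i j with hCmdef
    have hCm0 : 0 ≤ Cm :=
      Finset.sum_nonneg fun i _ => Finset.sum_nonneg fun j _ => hC0 i j
    have hCle : ∀ i j, C i j ≤ Cm := by
      intro i j
      calc C i j ≤ ∑ j', C i j' :=
            Finset.single_le_sum (fun k _ => hC0 i k) (Finset.mem_univ j)
        _ ≤ Cm := Finset.single_le_sum
            (fun k _ => Finset.sum_nonneg fun l _ => hC0 k l) (Finset.mem_univ i)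
    have hnum : (0:ℝ) < 1 + Cm * h := by
      have : (0:ℝ) ≤ Cm * h := mul_nonneg hCm0 (Nat.cast_nonneg h)
      linarith
    set T : ℝ := 2 * (1 + Cm * h) / m with hTdef
    have hT : 0 < T := by rw [hTdef]; positivity
    have hTkey : m * T / 2 = 1 + Cm * h := by
      rw [hTdef]; field_simp
    clear_value Cm T
    refine ⟨1, T, one_pos, hT, fun t _ => ?_⟩
    have key : ∀ i j, |peMatrix σ t T i j - (if i = j then (a i * μ i)^2 * T/2 else 0)| ≤ Cm :=
      fun i j => (entry_est S a μ hμ0 hpair i j t T).trans (hCle i j)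
    refine Matrix.PosSemidef.of_dotProduct_mulVec_nonneg ?_ ?_
    · -- Hermitian
      have hsym : ∀ i j : Fin h, peMatrix σ t T j i = peMatrix σ t T i j := by
        intro i j
        apply intervalIntegral.integral_congr
        intro τ _
        exact mul_comm _ _
      unfold Matrix.IsHermitian
      ext i j
      simp only [Matrix.conjTranspose_apply, Matrix.sub_apply, Matrix.smul_apply,
        Matrix.one_apply, smul_eq_mul, star_trivial]
      rw [hsym i j]
      by_cases hij : i = j
      · simp [hij]
      · have hji : ¬ j = i := fun e => hij e.symm
        simp [hij, hji]
    · intro x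
      simp only [star_trivial, dotProduct, Matrix.mulVec, Matrix.sub_apply,
        Matrix.smul_apply, Matrix.one_apply, smul_eq_mul]
      -- goal: 0 ≤ ∑ i, x i * ∑ j, (peMatrix σ t T i j - 1 * (if i = j then 1 else 0)) * x j
      have expand : (∑ i, x i * ∑ j, (peMatrix σ t T i j - 1 * (if i = j then 1 else 0)) * x j)
          = (∑ i, ∑ j, x i * x j *
              (peMatrix σ t T i j - (if i = j then (a i * μ i)^2 * T/2 else 0)))
            + ∑ i, (x i)^2 * ((a i * μ i)^2 * T/2 - 1) := by
        rw [← Finset.sum_add_distrib]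
        apply Finset.sum_congr rfl
        intro i _
        rw [Finset.mul_sum]
        have : ∀ j : Fin h, x i * ((peMatrix σ t T i j - 1 * (if i = j then 1 else 0)) * x j)
            = x i * x j * (peMatrix σ t T i j - (if i = j then (a i * μ i)^2 * T/2 else 0))
              + (if i = j then (x i)^2 * ((a i * μ i)^2 * T/2 - 1) else 0) := by
          intro j
          by_cases hij : i = j
          · subst hij; simp only [if_pos rfl, if_true]; ring
          · simp only [if_neg hij]; ring
        rw [Finset.sum_congr rfl (fun j _ => this j), Finset.sum_add_distrib,
          Finset.sum_ite_eq Finset.univ i, if_pos (Finset.mem_univ i)]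
      rw [expand]
      have bd1 : -(Cm * (∑ i, |x i|)^2)
          ≤ ∑ i, ∑ j, x i * x j *
              (peMatrix σ t T i j - (if i = j then (a i * μ i)^2 * T/2 else 0)) := by
        have : ∀ i j : Fin h, -(|x i| * |x j| * Cm)
            ≤ x i * x j * (peMatrix σ t T i j - (if i = j then (a i * μ i)^2 * T/2 else 0)) := by
          intro i j
          have h1 : |x i * x j * (peMatrix σ t T i j - (if i = j then (a i * μ i)^2 * T/2 else 0))|
              ≤ |x i| * |x j| * Cm := by
            rw [abs_mul, abs_mul]
            gcongr
            exact key i j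
          linarith [neg_abs_le (x i * x j *
            (peMatrix σ t T i j - (if i = j then (a i * μ i)^2 * T/2 else 0)))]
        calc -(Cm * (∑ i, |x i|)^2) = ∑ i, ∑ j, -(|x i| * |x j| * Cm) := by
              rw [sq, Finset.sum_mul_sum, Finset.mul_sum, ← Finset.sum_neg_distrib]
              apply Finset.sum_congr rfl; intro i _
              rw [Finset.mul_sum, ← Finset.sum_neg_distrib]
              apply Finset.sum_congr rfl; intro j _
              ring
          _ ≤ _ := Finset.sum_le_sum fun i _ => Finset.sum_le_sum fun j _ => this i j
      have bd2 : (m * T/2 - 1) * (∑ i, (x i)^2) ≤ ∑ i, (x i)^2 * ((a i * μ i)^2 * T/2 - 1) := by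
        rw [Finset.mul_sum]
        apply Finset.sum_le_sum
        intro i _
        rw [mul_comm]
        apply mul_le_mul_of_nonneg_left _ (sq_nonneg (x i))
        have := hm_le i
        nlinarith [hT.le]
      have cheb : (∑ i, |x i|)^2 ≤ (h : ℝ) * ∑ i, (x i)^2 := by
        have := sq_sum_le_card_mul_sum_sq (s := (Finset.univ : Finset (Fin h)))
          (f := fun i => |x i|)
        simp only [Finset.card_univ, Fintype.card_fin, sq_abs] at this
        exact_mod_cast this
      have hsum0 : 0 ≤ ∑ i, (x i)^2 := Finset.sum_nonneg fun i _ => sq_nonneg _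
      nlinarith [mul_nonneg hCm0 (sub_nonneg.mpr cheb), hTkey]
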